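/- Let X be a real vector space, Y a real Banach space, and f : X → Y with f(0) = 0 such that ‖f(2x+y) + f(2x−y) − 4f(x+y) − 4f(x−y) − 2f(2x) + 8f(x) + 6f(y)‖ ≤ δ for all x, y ∈ X. Then there exist functions Q₁, Q₂ : X → Y with Q₁(2x) = 4Q₁(x), Q₂(2x) = 16Q₂(x) for all x, and a constant C (depending only on δ) such that ‖f(x) − Q₁(x) − Q₂(x)‖ ≤ C for all x ∈ X. -/
import Mathlib

open Filter Topology

lemma hyers_aux {X Y : Type*} [AddCommGroup X] [Module ℝ X]
    [NormedAddCommGroup Y] [NormedSpace ℝ Y] [CompleteSpace Y]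
    (g : X → Y) (K a : ℝ) (ha : 1 < a)
    (hg : ∀ x : X, ‖g ((2:ℝ) • x) - a • g x‖ ≤ K) :
    ∃ Q : X → Y, (∀ x : X, Q ((2:ℝ) • x) = a • Q x) ∧
      (∀ x : X, ‖g x - Q x‖ ≤ K / (a - 1)) := by
  have ha0 : (0:ℝ) < a := lt_trans one_pos ha
  have ha0' : a ≠ 0 := ne_of_gt ha0
  set u : X → ℕ → Y := fun x n => (a ^ n)⁻¹ • g (((2:ℝ) ^ n) • x) with hu
  have hstep : ∀ x n, dist (u x n) (u x (n + 1)) ≤ (K / a) * (a⁻¹) ^ n := by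
    intro x n
    rw [dist_eq_norm]
    have : u x n - u x (n + 1)
        = -((a ^ (n+1))⁻¹ • (g ((2:ℝ) • ((2:ℝ) ^ n • x)) - a • g ((2:ℝ) ^ n • x))) := by
      simp only [hu]
      rw [smul_smul]
      have h2 : (2:ℝ) * (2:ℝ)^n = (2:ℝ)^(n+1) := (pow_succ' 2 n).symm
      rw [h2, smul_sub, smul_smul, pow_succ, mul_inv]
      match_scalars <;> field_simp
    rw [this, norm_neg, norm_smul, norm_inv, Real.norm_eq_abs,
      abs_of_pos (pow_pos ha0 _)]
    have hb := hg (((2:ℝ) ^ n) • x)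
    have hpos : (0:ℝ) < a ^ (n+1) := pow_pos ha0 _
    calc (a ^ (n+1))⁻¹ * ‖g ((2:ℝ) • ((2:ℝ) ^ n • x)) - a • g ((2:ℝ) ^ n • x)‖
        ≤ (a ^ (n+1))⁻¹ * K := by
          apply mul_le_mul_of_nonneg_left hb (inv_nonneg.mpr hpos.le)
      _ = (K / a) * (a⁻¹) ^ n := by
          rw [pow_succ, mul_inv, inv_pow]; ring
  have hr : a⁻¹ < 1 := inv_lt_one_of_one_lt₀ ha
  have hcauchy : ∀ x, CauchySeq (u x) := fun x =>
    cauchySeq_of_le_geometric a⁻¹ (K / a) hr (hstep x)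
  have : Nonempty Y := ⟨0⟩
  set Q : X → Y := fun x => limUnder atTop (u x) with hQdef
  have hQ : ∀ x, Tendsto (u x) atTop (𝓝 (Q x)) := fun x => (hcauchy x).tendsto_limUnder
  refine ⟨Q, ?_, ?_⟩
  · intro x
    have h1 : ∀ n, u ((2:ℝ) • x) n = a • u x (n + 1) := by
      intro n
      simp only [hu, smul_smul]
      rw [← pow_succ]
      congr 1
      rw [pow_succ]
      field_simp
    have h2 : Tendsto (fun n => u x (n + 1)) atTop (𝓝 (Q x)) :=
      (hQ x).comp (tendsto_add_atTop_nat 1)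
    have h3 : Tendsto (u ((2:ℝ) • x)) atTop (𝓝 (a • Q x)) := by
      have heq : u ((2:ℝ) • x) = fun n => a • u x (n + 1) := funext h1
      rw [heq]
      exact h2.const_smul a
    exact tendsto_nhds_unique (hQ ((2:ℝ) • x)) h3
  · intro x
    have h0 : u x 0 = g x := by simp [hu]
    have hb := dist_le_of_le_geometric_of_tendsto₀ a⁻¹ (K / a) hr (hstep x) (hQ x)
    rw [h0, dist_eq_norm] at hb
    have heq : K / a / (1 - a⁻¹) = K / (a - 1) := by
      rw [div_div]
      congr 1
      field_simp
    rwa [heq] at hb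

theorem stmt_19 {X Y : Type*} [AddCommGroup X] [Module ℝ X]
    [NormedAddCommGroup Y] [NormedSpace ℝ Y] [CompleteSpace Y]
    (δ : ℝ) (hδ : 0 ≤ δ) :
    ∃ C : ℝ, ∀ f : X → Y, f 0 = 0 →
      (∀ x y : X, ‖f ((2:ℝ) • x + y) + f ((2:ℝ) • x - y) - (4:ℝ) • f (x + y)
        - (4:ℝ) • f (x - y) - (2:ℝ) • f ((2:ℝ) • x) + (8:ℝ) • f x + (6:ℝ) • f y‖ ≤ δ) →
      ∃ Q₁ Q₂ : X → Y,
        (∀ x : X, Q₁ ((2:ℝ) • x) = (4:ℝ) • Q₁ x) ∧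
        (∀ x : X, Q₂ ((2:ℝ) • x) = (16:ℝ) • Q₂ x) ∧
        (∀ x : X, ‖f x - Q₁ x - Q₂ x‖ ≤ C) := by
  refine ⟨δ, fun f hf0 hf => ?_⟩
  -- key estimate : ‖f(4x) - 20 f(2x) + 64 f(x)‖ ≤ 19/3 δ
  have key : ∀ x : X, ‖f ((4:ℝ) • x) - (20:ℝ) • f ((2:ℝ) • x) + (64:ℝ) • f x‖
      ≤ 19 / 3 * δ := by
    intro x
    have h1 := hf x ((2:ℝ) • x)
    rw [show (2:ℝ) • x + (2:ℝ) • x = (4:ℝ) • x by module,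
        show (2:ℝ) • x - (2:ℝ) • x = (0:X) by module,
        show x + (2:ℝ) • x = (3:ℝ) • x by module,
        show x - (2:ℝ) • x = -x by module, hf0] at h1
    have h2 := hf x x
    rw [show (2:ℝ) • x + x = (3:ℝ) • x by module,
        show (2:ℝ) • x - x = x by module,
        show x + x = (2:ℝ) • x by module, sub_self, hf0] at h2
    have h3 := hf 0 x
    rw [show (2:ℝ) • (0:X) + x = x by module,
        show (2:ℝ) • (0:X) - x = -x by module,
        zero_add, zero_sub, smul_zero, hf0] at h3
    have hid : f ((4:ℝ) • x) - (20:ℝ) • f ((2:ℝ) • x) + (64:ℝ) • f x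
        = (f ((4:ℝ) • x) + 0 - (4:ℝ) • f ((3:ℝ) • x) - (4:ℝ) • f (-x)
            - (2:ℝ) • f ((2:ℝ) • x) + (8:ℝ) • f x + (6:ℝ) • f ((2:ℝ) • x))
          + (4:ℝ) • (f ((3:ℝ) • x) + f x - (4:ℝ) • f ((2:ℝ) • x) - (4:ℝ) • 0
            - (2:ℝ) • f ((2:ℝ) • x) + (8:ℝ) • f x + (6:ℝ) • f x)
          - (4/3 : ℝ) • (f x + f (-x) - (4:ℝ) • f x - (4:ℝ) • f (-x)
            - (2:ℝ) • (0:Y) + (8:ℝ) • (0:Y) + (6:ℝ) • f x) := by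
      module
    calc ‖f ((4:ℝ) • x) - (20:ℝ) • f ((2:ℝ) • x) + (64:ℝ) • f x‖
        ≤ ‖(f ((4:ℝ) • x) + 0 - (4:ℝ) • f ((3:ℝ) • x) - (4:ℝ) • f (-x)
            - (2:ℝ) • f ((2:ℝ) • x) + (8:ℝ) • f x + (6:ℝ) • f ((2:ℝ) • x))‖
          + ‖(4:ℝ)‖ * ‖(f ((3:ℝ) • x) + f x - (4:ℝ) • f ((2:ℝ) • x) - (4:ℝ) • 0
            - (2:ℝ) • f ((2:ℝ) • x) + (8:ℝ) • f x + (6:ℝ) • f x)‖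
          + ‖(4/3 : ℝ)‖ * ‖(f x + f (-x) - (4:ℝ) • f x - (4:ℝ) • f (-x)
            - (2:ℝ) • (0:Y) + (8:ℝ) • (0:Y) + (6:ℝ) • f x)‖ := by
          rw [hid]
          refine le_trans (norm_sub_le _ _) ?_
          gcongr
          · refine le_trans (norm_add_le _ _) ?_
            rw [norm_smul]
          · rw [norm_smul]
      _ ≤ δ + ‖(4:ℝ)‖ * δ + ‖(4/3:ℝ)‖ * δ := by
          gcongr <;> first | exact h1 | exact h2 | exact h3 | positivity
      _ ≤ 19 / 3 * δ := by
          rw [Real.norm_eq_abs, Real.norm_eq_abs]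
          rw [abs_of_pos (by norm_num : (0:ℝ) < 4), abs_of_pos (by norm_num : (0:ℝ) < 4/3)]
          linarith
  set g : X → Y := fun x => f ((2:ℝ) • x) - (16:ℝ) • f x with hgdef
  set h : X → Y := fun x => f ((2:ℝ) • x) - (4:ℝ) • f x with hhdef
  have hg : ∀ x : X, ‖g ((2:ℝ) • x) - (4:ℝ) • g x‖ ≤ 19/3 * δ := by
    intro x
    have : g ((2:ℝ) • x) - (4:ℝ) • g x
        = f ((4:ℝ) • x) - (20:ℝ) • f ((2:ℝ) • x) + (64:ℝ) • f x := by
      simp only [hgdef]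
      rw [show (2:ℝ) • ((2:ℝ) • x) = (4:ℝ) • x by module]
      module
    rw [this]; exact key x
  have hh : ∀ x : X, ‖h ((2:ℝ) • x) - (16:ℝ) • h x‖ ≤ 19/3 * δ := by
    intro x
    have : h ((2:ℝ) • x) - (16:ℝ) • h x
        = f ((4:ℝ) • x) - (20:ℝ) • f ((2:ℝ) • x) + (64:ℝ) • f x := by
      simp only [hhdef]
      rw [show (2:ℝ) • ((2:ℝ) • x) = (4:ℝ) • x by module]
      module
    rw [this]; exact key x
  obtain ⟨Q, hQhom, hQb⟩ := hyers_aux g (19/3 * δ) 4 (by norm_num) hg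
  obtain ⟨R, hRhom, hRb⟩ := hyers_aux h (19/3 * δ) 16 (by norm_num) hh
  refine ⟨fun x => -((12:ℝ)⁻¹ • Q x), fun x => (12:ℝ)⁻¹ • R x, ?_, ?_, ?_⟩
  · intro x
    show -((12:ℝ)⁻¹ • Q ((2:ℝ) • x)) = (4:ℝ) • -((12:ℝ)⁻¹ • Q x)
    rw [hQhom x, smul_neg, smul_smul, smul_smul, mul_comm]
  · intro x
    show (12:ℝ)⁻¹ • R ((2:ℝ) • x) = (16:ℝ) • (12:ℝ)⁻¹ • R x
    rw [hRhom x, smul_smul, smul_smul, mul_comm]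
  · intro x
    show ‖f x - -((12:ℝ)⁻¹ • Q x) - (12:ℝ)⁻¹ • R x‖ ≤ δ
    have hfx : f x - -((12:ℝ)⁻¹ • Q x) - (12:ℝ)⁻¹ • R x
        = (12:ℝ)⁻¹ • ((h x - R x) - (g x - Q x)) := by
      simp only [hgdef, hhdef]
      module
    rw [hfx, norm_smul]
    have h1 := hQb x
    have h2 := hRb x
    have hn : ‖(h x - R x) - (g x - Q x)‖ ≤ 19/3*δ/15 + 19/3*δ/3 := by
      refine le_trans (norm_sub_le _ _) ?_
      have : (16:ℝ) - 1 = 15 := by norm_num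
      rw [this] at h2
      have : (4:ℝ) - 1 = 3 := by norm_num
      rw [this] at h1
      linarith
    calc ‖(12:ℝ)⁻¹‖ * ‖(h x - R x) - (g x - Q x)‖
        ≤ (12:ℝ)⁻¹ * (19/3*δ/15 + 19/3*δ/3) := by
          rw [Real.norm_eq_abs, abs_of_pos (by norm_num : (0:ℝ) < 12⁻¹)]
          gcongr
      _ ≤ δ := by linarith
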